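/- Let n ≥ 1 and let K be a field in which every polynomial of degree exactly n has a root. If T : M_n(K) → M_n(K) is a linear map preserving the L-relation, then for every matrix A of rank 1, the image T(A) has rank at most 1. -/

import Mathlib

open Matrix


/-- The row space of a square matrix: the span of its rows. -/
def rowSpace {K : Type*} [Field K] {n : ℕ} (A : Matrix (Fin n) (Fin n) K) :
    Submodule K (Fin n → K) :=
  Submodule.span K (Set.range A)

lemma rank_eq_finrank_rowSpace {K : Type*} [Field K] {n : ℕ}
    (A : Matrix (Fin n) (Fin n) K) :
    A.rank = Module.finrank K (rowSpace A) := by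
  rw [← Matrix.rank_transpose, Matrix.rank, Matrix.range_mulVecLin,
    rowSpace]
  rfl

/-- every square matrix over such a field has an eigenvalue/eigenvector. -/
lemma exists_eigenvector {K : Type*} [Field K] {n : ℕ} (hn : 1 ≤ n)
    (hK : ∀ p : Polynomial K, p.degree = n → ∃ x : K, p.eval x = 0)
    (N : Matrix (Fin n) (Fin n) K) :
    ∃ (lam : K) (v : Fin n → K), v ≠ 0 ∧ N *ᵥ v = lam • v := by
  obtain ⟨lam, hlam⟩ := hK N.charpoly
    (by rw [Matrix.charpoly_degree_eq_dim, Fintype.card_fin])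
  have hmap : (charmatrix N).map (Polynomial.eval lam)
      = lam • (1 : Matrix (Fin n) (Fin n) K) - N := by
    ext i j
    by_cases h : i = j
    · subst h
      simp [charmatrix_apply_eq, Matrix.one_apply]
    · simp [charmatrix_apply_ne _ _ _ h, Matrix.one_apply_ne h]
  have hdet : (lam • (1 : Matrix (Fin n) (Fin n) K) - N).det = 0 := by
    have h := RingHom.map_det (Polynomial.evalRingHom lam) (charmatrix N)
    rw [RingHom.mapMatrix_apply, Polynomial.coe_evalRingHom] at h
    rw [Matrix.charpoly, h, hmap] at hlam
    exact hlam
  obtain ⟨v, hv, hmv⟩ := (Matrix.exists_mulVec_eq_zero_iff).2 hdet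
  refine ⟨lam, v, hv, ?_⟩
  rw [Matrix.sub_mulVec] at hmv
  have h1 : (lam • (1 : Matrix (Fin n) (Fin n) K)) *ᵥ v = lam • v := by
    rw [Matrix.smul_mulVec, Matrix.one_mulVec]
  rw [h1] at hmv
  exact (sub_eq_zero.mp hmv).symm

/-- Over a field in which every polynomial of degree exactly `n` has a root, a
linear `L`-preserver on `M_n(K)` maps every rank-one matrix to a matrix of rank
at most one. -/
theorem L_preserver_rank_one_to_rank_le_one
    {K : Type*} [Field K] {n : ℕ} (hn : 1 ≤ n)
    (hK : ∀ p : Polynomial K, p.degree = n → ∃ x : K, p.eval x = 0)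
    (T : Matrix (Fin n) (Fin n) K →ₗ[K] Matrix (Fin n) (Fin n) K)
    (hL : ∀ A B : Matrix (Fin n) (Fin n) K,
      rowSpace A = rowSpace B → rowSpace (T A) = rowSpace (T B)) :
    ∀ A : Matrix (Fin n) (Fin n) K, A.rank = 1 → (T A).rank ≤ 1 := by
  intro A hA
  -- row space of `A` is one-dimensional, spanned by some `y ≠ 0`
  have hfr : Module.finrank K (rowSpace A) = 1 := by
    rw [← rank_eq_finrank_rowSpace]; exact hA
  obtain ⟨⟨y, hyA⟩, hy0, hyspan⟩ := finrank_eq_one_iff'.mp hfr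
  have hy : y ≠ 0 := fun h => hy0 (by ext; simp [h])
  have hAspan : rowSpace A = Submodule.span K {y} := by
    apply le_antisymm
    · intro w hw
      obtain ⟨c, hc⟩ := hyspan ⟨w, hw⟩
      have : c • y = w := congrArg Subtype.val hc
      rw [← this]
      exact Submodule.smul_mem _ _ (Submodule.mem_span_singleton_self y)
    · rw [Submodule.span_le, Set.singleton_subset_iff]
      exact hyA
  -- row space of `vecMulVec w y` equals `span {y}` for `w ≠ 0`
  have hvmv : ∀ w : Fin n → K, w ≠ 0 →
      rowSpace (Matrix.vecMulVec w y) = Submodule.span K {y} := by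
    intro w hw
    apply le_antisymm
    · rw [rowSpace, Submodule.span_le]
      rintro _ ⟨i, rfl⟩
      have : Matrix.vecMulVec w y i = w i • y := by
        funext j; simp [Matrix.vecMulVec_apply]
      rw [this]
      exact Submodule.smul_mem _ _ (Submodule.mem_span_singleton_self y)
    · rw [Submodule.span_le, Set.singleton_subset_iff]
      obtain ⟨i, hi⟩ := Function.ne_iff.mp hw
      have hi : w i ≠ 0 := hi
      have hmem : Matrix.vecMulVec w y i ∈ rowSpace (Matrix.vecMulVec w y) :=
        Submodule.subset_span (Set.mem_range_self i)
      have hyeq : y = (w i)⁻¹ • Matrix.vecMulVec w y i := by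
        funext j; simp [Matrix.vecMulVec_apply]
        field_simp
      have hsm := Submodule.smul_mem _ ((w i)⁻¹) hmem
      rwa [← hyeq] at hsm
  set V := rowSpace (T A) with hV
  -- key: images of the punctured line of rank-one matrices all have row space V
  have hkeyV : ∀ w : Fin n → K, w ≠ 0 → rowSpace (T (Matrix.vecMulVec w y)) = V := by
    intro w hw
    exact hL _ _ ((hvmv w hw).trans hAspan.symm)
  rw [rank_eq_finrank_rowSpace, ← hV]
  by_contra hcon
  have hr2 : 2 ≤ Module.finrank K V := by omega
  -- pick two basis vectors of V and dual functionals
  set r := Module.finrank K V with hr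
  let b : Module.Basis (Fin r) K V := Module.finBasis K V
  obtain ⟨π, hπ⟩ := V.subtype.exists_leftInverse_of_injective V.ker_subtype
  have hπ' : ∀ v : V, π (v : Fin n → K) = v := fun v => congrArg (· v) hπ
  let i0 : Fin r := ⟨0, by omega⟩
  let i1 : Fin r := ⟨1, by omega⟩
  let f₁ : (Fin n → K) →ₗ[K] K := (b.coord i0).comp π
  let f₂ : (Fin n → K) →ₗ[K] K := (b.coord i1).comp π
  have hf : ∀ (i j : Fin r), (b.coord i).comp π ((b j : Fin n → K))
      = if j = i then 1 else 0 := by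
    intro i j
    simp only [LinearMap.comp_apply, hπ' (b j), Module.Basis.coord_apply, Module.Basis.repr_self]
    exact Finsupp.single_apply
  -- linearity helpers for vecMulVec
  have hvadd : ∀ w w' : Fin n → K,
      Matrix.vecMulVec (w + w') y = Matrix.vecMulVec w y + Matrix.vecMulVec w' y := by
    intro w w'; ext i j; simp [Matrix.vecMulVec_apply]; ring
  have hvsmul : ∀ (c : K) (w : Fin n → K),
      Matrix.vecMulVec (c • w) y = c • Matrix.vecMulVec w y := by
    intro c w; ext i j; simp [Matrix.vecMulVec_apply]; ring
  -- the two derived endomorphisms of Kⁿ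
  let D : ((Fin n → K) →ₗ[K] K) → ((Fin n → K) →ₗ[K] (Fin n → K)) := fun f =>
    { toFun := fun w i => f (T (Matrix.vecMulVec w y) i)
      map_add' := by
        intro w w'
        funext i
        show f (T (Matrix.vecMulVec (w + w') y) i)
            = f (T (Matrix.vecMulVec w y) i) + f (T (Matrix.vecMulVec w' y) i)
        rw [hvadd, map_add]
        exact map_add f _ _
      map_smul' := by
        intro c w
        funext i
        show f (T (Matrix.vecMulVec (c • w) y) i)
            = c • f (T (Matrix.vecMulVec w y) i)
        rw [hvsmul, _root_.map_smul]
        exact _root_.map_smul f c _ }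
  have hD : ∀ (f : (Fin n → K) →ₗ[K] K) (w : Fin n → K) (i : Fin n),
      D f w i = f (T (Matrix.vecMulVec w y) i) := fun _ _ _ => rfl
  -- if some functional kills all rows of a nonzero member, it kills V
  have hkill : ∀ (f : (Fin n → K) →ₗ[K] K) (w : Fin n → K), w ≠ 0 →
      (∀ i, f (T (Matrix.vecMulVec w y) i) = 0) → ∀ v ∈ V, f v = 0 := by
    intro f w hw hf0 v hv
    have hVw := hkeyV w hw
    have hle : V ≤ LinearMap.ker f := by
      rw [← hVw, rowSpace, Submodule.span_le]
      rintro _ ⟨i, rfl⟩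
      exact hf0 i
    exact hle hv
  -- D f₁ is injective
  have hD1inj : Function.Injective (D f₁) := by
    rw [← LinearMap.ker_eq_bot]
    rw [LinearMap.ker_eq_bot']
    intro w hw0
    by_contra hw
    have := hkill f₁ w hw (fun i => by rw [← hD f₁ w i, hw0]; rfl)
      (b i0 : Fin n → K) (b i0).2
    have h1 : f₁ (b i0 : Fin n → K) = 1 := by
      have := hf i0 i0
      simpa [f₁] using this
    rw [h1] at this
    exact one_ne_zero this
  -- pass to matrices and find an eigenvector
  let M₁ := LinearMap.toMatrix' (D f₁)
  let M₂ := LinearMap.toMatrix' (D f₂)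
  have hmul : ∀ (g : (Fin n → K) →ₗ[K] (Fin n → K)) (w : Fin n → K),
      (LinearMap.toMatrix' g) *ᵥ w = g w := by
    intro g w
    rw [← Matrix.toLin'_apply, Matrix.toLin'_toMatrix']
  have hdet1 : M₁.det ≠ 0 := by
    intro h0
    obtain ⟨v, hv, hmv⟩ := Matrix.exists_mulVec_eq_zero_iff.2 h0
    rw [hmul] at hmv
    exact hv (hD1inj (by rw [hmv]; exact (map_zero _).symm))
  obtain ⟨lam, v, hv, hev⟩ := exists_eigenvector hn hK (M₁⁻¹ * M₂)
  -- D f₂ v = lam • D f₁ v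
  have hDv : D f₂ v = lam • D f₁ v := by
    have h2 : M₂ *ᵥ v = M₁ *ᵥ ((M₁⁻¹ * M₂) *ᵥ v) := by
      rw [Matrix.mulVec_mulVec, Matrix.mul_nonsing_inv_cancel_left _ _
        (isUnit_iff_ne_zero.mpr hdet1)]
    rw [hev, Matrix.mulVec_smul] at h2
    rw [← hmul (D f₂) v, h2, hmul]
  -- apply the kill lemma to f₂ - lam • f₁
  have hzero : ∀ i, (f₂ - lam • f₁) (T (Matrix.vecMulVec v y) i) = 0 := by
    intro i
    have : (f₂ - lam • f₁) (T (Matrix.vecMulVec v y) i)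
        = D f₂ v i - lam * D f₁ v i := by
      simp [hD, LinearMap.sub_apply, LinearMap.smul_apply, smul_eq_mul]
    rw [this, hDv]
    simp
  have := hkill (f₂ - lam • f₁) v hv hzero (b i1 : Fin n → K) (b i1).2
  have h10 : f₁ (b i1 : Fin n → K) = 0 := by
    have := hf i0 i1
    simpa [f₁, i0, i1, Fin.ext_iff] using this
  have h11 : f₂ (b i1 : Fin n → K) = 1 := by
    have := hf i1 i1
    simpa [f₂] using this
  rw [LinearMap.sub_apply, LinearMap.smul_apply, h10, h11] at this
  simp at this
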